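/- Decorrelation of the chain coordinate. Assume ψ_U(n) → 0 and the random Doeblin condition; let ρ ∈ (0,1), (μ_ω) and (K_p)_{p≥1} be as in the effective random geometric ergodicity theorem. Let f, g : 𝒴 × X → ℝ be measurable with F_ω := ess sup_{μ_ω} |f(ω_0,·)| and G_ω := ess sup_{μ_ω} |g(ω_0,·)| in L^q(ℙ) for some q > 2. Then there exist C > 0 and ρ_1 ∈ (0,1) such that for every n ∈ ℕ, | ∫_Ω ∫_X f(ω_0,x) · (R_{ω,n} g(ω_n,·))(x) dμ_ω(x) dℙ(ω) − ∫_Ω μ_ω(f(ω_0,·)) · μ_{θ^n ω}(g(ω_n,·)) dℙ(ω) | ≤ C ρ_1^n ‖F‖_{L^q(ℙ)} ‖G‖_{L^q(ℙ)}. -/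

import Mathlib

open MeasureTheory ProbabilityTheory Filter
open scoped ENNReal NNReal

noncomputable section

variable {𝒴 X : Type*} [MeasurableSpace 𝒴] [MeasurableSpace X]

/-- The left shift `θ` on `Ω = 𝒴^ℤ`. -/
def shift (ω : ℤ → 𝒴) : ℤ → 𝒴 := fun n => ω (n + 1)

/-- `θ^{-n} ω`. -/
def shiftBack (n : ℕ) (ω : ℤ → 𝒴) : ℤ → 𝒴 := fun s => ω (s - n)

/-- The σ-algebra `F_S` generated by the coordinate maps `ω ↦ ω s`, `s ∈ S`. -/
def coordSigma (𝒴 : Type*) [m𝒴 : MeasurableSpace 𝒴] (S : Set ℤ) :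
    MeasurableSpace (ℤ → 𝒴) :=
  ⨆ s ∈ S, m𝒴.comap fun ω => ω s

/-- The upper ψ-mixing coefficients `ψ_U(n)`. -/
def psiU (P : Measure (ℤ → 𝒴)) (n : ℕ) : ℝ :=
  sSup { r : ℝ | ∃ k : ℤ, ∃ A B : Set (ℤ → 𝒴),
    MeasurableSet[coordSigma 𝒴 {s | s ≤ k}] A ∧
    MeasurableSet[coordSigma 𝒴 {s | k + n ≤ s}] B ∧
    0 < (P A).toReal * (P B).toReal ∧
    r = (P (A ∩ B)).toReal / ((P A).toReal * (P B).toReal) - 1 }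

/-- The `n`-step kernel composition `R_{ω,n} = R_{ω_0} ∘ R_{ω_1} ∘ ⋯ ∘ R_{ω_{n-1}}`. -/
def Rcomp (R : 𝒴 → Kernel X X) : ℕ → (ℤ → 𝒴) → Kernel X X
  | 0, _ => Kernel.id
  | n + 1, ω => (Rcomp R n (shift ω)) ∘ₖ R (ω 0)

/-- `‖κ − μ‖_∞`: the supremum over measurable `g` with `sup|g| ≤ 1` and over `x`
of `|κ g (x) − μ(g)|`. -/
def opDist (κ : Kernel X X) (μ : Measure X) : ℝ :=
  sSup { r : ℝ | ∃ g : X → ℝ, Measurable g ∧ (∀ x, |g x| ≤ 1) ∧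
    ∃ x : X, r = |(∫ y, g y ∂(κ x)) - ∫ y, g y ∂μ| }

/-- The random Doeblin condition: ℙ-a.s.,
`R_{θ^{-n_ω}ω, n_ω}(x, Γ) ≥ γ_ω m_ω(Γ)` for all `x` and all measurable `Γ`. -/
def Doeblin (P : Measure (ℤ → 𝒴)) (R : 𝒴 → Kernel X X)
    (nD : (ℤ → 𝒴) → ℕ) (γ : (ℤ → 𝒴) → ℝ) (m : (ℤ → 𝒴) → Measure X) : Prop :=
  ∀ᵐ ω ∂P, ∀ x : X, ∀ Γ : Set X, MeasurableSet Γ →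
    ENNReal.ofReal (γ ω) * m ω Γ ≤ Rcomp R (nD ω) (shiftBack (nD ω) ω) x Γ

/-- Equivariance `(R_ω)^* μ_ω = μ_{θ ω}`, ℙ-a.s. -/
def Equivariant (P : Measure (ℤ → 𝒴)) (R : 𝒴 → Kernel X X)
    (μ : (ℤ → 𝒴) → Measure X) : Prop :=
  ∀ᵐ ω ∂P, ∀ Γ : Set X, MeasurableSet Γ →
    μ (shift ω) Γ = ∫⁻ x, R (ω 0) x Γ ∂(μ ω)

/-- The effective geometric ergodicity rates for a given random variable `K` and
exponent `p`: ℙ-a.s., for all `n`,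
`max(‖R_{θ^{-n}ω,n} − μ_ω‖_∞, ‖R_{ω,n} − μ_{θ^n ω}‖_∞) ≤ K(ω) ρ^{n/p}`. -/
def RateFor (P : Measure (ℤ → 𝒴)) (R : 𝒴 → Kernel X X)
    (μ : (ℤ → 𝒴) → Measure X) (ρ p : ℝ) (K : (ℤ → 𝒴) → ℝ) : Prop :=
  ∀ᵐ ω ∂P, ∀ n : ℕ,
    max (opDist (Rcomp R n (shiftBack n ω)) (μ ω))
        (opDist (Rcomp R n ω) (μ (shift^[n] ω))) ≤ K ω * ρ ^ ((n : ℝ) / p)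

/-- Effective rates: for every finite `p ≥ 1` there is `K_p ∈ L^p(ℙ)`
realizing the exponential rates with exponent `ρ^{n/p}`. -/
def EffectiveRates (P : Measure (ℤ → 𝒴)) (R : 𝒴 → Kernel X X)
    (μ : (ℤ → 𝒴) → Measure X) (ρ : ℝ) : Prop :=
  ∀ p : ℝ, 1 ≤ p → ∃ K : (ℤ → 𝒴) → ℝ,
    MemLp K (ENNReal.ofReal p) P ∧ RateFor P R μ ρ p K

lemma measurable_shift : Measurable (shift (𝒴 := 𝒴)) :=
  measurable_pi_lambda _ fun s => measurable_pi_apply _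

lemma shift_iterate_apply (n : ℕ) (ω : ℤ → 𝒴) (s : ℤ) : (shift^[n] ω) s = ω (s + n) := by
  induction n generalizing ω with
  | zero => simp
  | succ n ih =>
      rw [Function.iterate_succ_apply, ih]
      simp only [shift]
      congr 1
      push_cast
      ring

lemma Rcomp_markov (R : 𝒴 → Kernel X X) [∀ y, IsMarkovKernel (R y)] (n : ℕ) (ω : ℤ → 𝒴) :
    IsMarkovKernel (Rcomp R n ω) := by
  induction n generalizing ω with
  | zero => rw [Rcomp]; infer_instance
  | succ n ih => rw [Rcomp]; have := ih (shift ω); infer_instance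

lemma Rcomp_measurable (R : 𝒴 → Kernel X X) [∀ y, IsMarkovKernel (R y)]
    (hRmeas : ∀ Γ : Set X, MeasurableSet Γ → Measurable fun a : 𝒴 × X => R a.1 a.2 Γ)
    (n : ℕ) {Γ : Set X} (hΓ : MeasurableSet Γ) :
    Measurable fun p : (ℤ → 𝒴) × X => Rcomp R n p.1 p.2 Γ := by
  induction n generalizing Γ with
  | zero =>
      simp only [Rcomp, Kernel.id_apply, Measure.dirac_apply' _ hΓ]
      exact (measurable_const.indicator hΓ).comp measurable_snd
  | succ n ih =>
      have hξm : Measurable (fun p : (ℤ → 𝒴) × X => R (p.1 0) p.2 : _ → Measure X) := by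
        refine Measure.measurable_of_measurable_coe _ fun s hs => ?_
        have m : Measurable fun p : (ℤ → 𝒴) × X => (p.1 0, p.2) :=
          ((measurable_pi_apply 0).comp measurable_fst).prodMk measurable_snd
        exact (hRmeas s hs).comp m
      let ξ : Kernel ((ℤ → 𝒴) × X) X := ⟨fun p => R (p.1 0) p.2, hξm⟩
      haveI : IsMarkovKernel ξ := ⟨fun p => show IsProbabilityMeasure (R (p.1 0) p.2) from inferInstance⟩
      have hmap : Measurable (fun q : (((ℤ → 𝒴) × X) × X) => Rcomp R n (shift q.1.1) q.2 Γ) :=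
        (ih hΓ).comp ((measurable_shift.comp (measurable_fst.comp measurable_fst)).prodMk
          measurable_snd)
      have := hmap.lintegral_kernel_prod_right' (κ := ξ)
      simp only [Rcomp]
      convert this using 2 with p
      rw [Kernel.comp_apply' _ _ _ hΓ]
      rfl

lemma norm_integral_le_of_bound {ν : Measure X} [IsProbabilityMeasure ν] {u : X → ℝ} {c : ℝ}
    (h : ∀ x, ‖u x‖ ≤ c) : ‖∫ x, u x ∂ν‖ ≤ c := by
  simpa using norm_integral_le_of_norm_le_const (μ := ν) (Eventually.of_forall h)

lemma equi_induct (R : 𝒴 → Kernel X X) [∀ y, IsMarkovKernel (R y)] (μ : (ℤ → 𝒴) → Measure X) :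
    ∀ (n : ℕ) (ω : ℤ → 𝒴),
      (∀ j : ℕ, ∀ Γ : Set X, MeasurableSet Γ →
        μ (shift (shift^[j] ω)) Γ = ∫⁻ x, R ((shift^[j] ω) 0) x Γ ∂ μ (shift^[j] ω)) →
      μ (shift^[n] ω) = (μ ω).bind (Rcomp R n ω)
  | 0, ω, _ => by
      ext Γ hΓ
      rw [Measure.bind_apply hΓ (Kernel.measurable _).aemeasurable]
      simp only [Rcomp, Kernel.id_apply, Measure.dirac_apply' _ hΓ]
      rw [lintegral_indicator hΓ]
      simp
  | n + 1, ω, hyp => by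
      have h0 : μ (shift ω) = (μ ω).bind (R (ω 0)) := by
        ext Γ hΓ
        rw [Measure.bind_apply hΓ (Kernel.measurable _).aemeasurable]
        simpa using hyp 0 Γ hΓ
      have ih := equi_induct R μ n (shift ω) (fun j Γ hΓ => by
        have := hyp (j + 1) Γ hΓ
        rwa [Function.iterate_succ_apply] at this)
      ext Γ hΓ
      rw [Function.iterate_succ_apply, ih, Measure.bind_apply hΓ (Kernel.measurable _).aemeasurable, h0,
        Measure.lintegral_bind (Kernel.measurable _).aemeasurable (Kernel.measurable_coe _ hΓ).aemeasurable,
        Measure.bind_apply hΓ (Kernel.measurable _).aemeasurable]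
      refine lintegral_congr fun x => ?_
      rw [show Rcomp R (n + 1) ω = Rcomp R n (shift ω) ∘ₖ R (ω 0) from rfl,
        Kernel.comp_apply' _ _ _ hΓ]

lemma trunc_eq {v c : ℝ} (h : |v| ≤ c) : max (min v c) (-c) = v := by
  rw [min_eq_left (abs_le.1 h).2, max_eq_left (abs_le.1 h).1]

lemma trunc_abs_le {v c : ℝ} (hc : 0 ≤ c) : |max (min v c) (-c)| ≤ c :=
  abs_le.2 ⟨le_max_right _ _, max_le (min_le_right _ _) ((neg_nonpos.2 hc).trans hc)⟩

lemma core_est (μ0 μn : Measure X) [IsProbabilityMeasure μ0] [IsProbabilityMeasure μn]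
    (κn : Kernel X X) [IsMarkovKernel κn]
    (hbind : μn = μ0.bind ⇑κn)
    (f0 g0 : X → ℝ) (hf0 : Measurable f0) (hg0 : Measurable g0)
    (a b : ℝ) (ha : 0 ≤ a) (hb : 0 ≤ b)
    (hFa : ∀ᵐ x ∂μ0, |f0 x| ≤ a) (hGb : ∀ᵐ x ∂μn, |g0 x| ≤ b)
    (D : ℝ) (hD : opDist κn μn ≤ D) (hD0 : 0 ≤ D) :
    |(∫ x, f0 x * ∫ y, g0 y ∂(κn x) ∂μ0) - (∫ x, f0 x ∂μ0) * ∫ y, g0 y ∂μn| ≤ a * b * D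
    ∧ |∫ x, f0 x * ∫ y, g0 y ∂(κn x) ∂μ0| ≤ a * b
    ∧ |(∫ x, f0 x ∂μ0) * ∫ y, g0 y ∂μn| ≤ a * b := by
  haveI : ∀ x, IsProbabilityMeasure (κn x) := fun x => IsMarkovKernel.isProbabilityMeasure x
  set fT : X → ℝ := fun x => max (min (f0 x) a) (-a) with hft_def
  set gT : X → ℝ := fun y => max (min (g0 y) b) (-b) with hgt_def
  have hft_le : ∀ x, |fT x| ≤ a := fun x => trunc_abs_le ha
  have hgt_le : ∀ y, |gT y| ≤ b := fun y => trunc_abs_le hb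
  have hft_meas : Measurable fT := (hf0.min measurable_const).max measurable_const
  have hgt_meas : Measurable gT := (hg0.min measurable_const).max measurable_const
  have hfae : f0 =ᵐ[μ0] fT := hFa.mono fun x hx => (trunc_eq hx).symm
  have hgae : g0 =ᵐ[μn] gT := hGb.mono fun y hy => (trunc_eq hy).symm
  -- the inner integrals agree a.e.
  have hdiff0 : ∫⁻ y, (‖g0 y - gT y‖₊ : ℝ≥0∞) ∂μn = 0 := by
    have : (fun y => (‖g0 y - gT y‖₊ : ℝ≥0∞)) =ᵐ[μn] 0 :=
      hgae.mono fun y hy => by simp [hy]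
    rw [lintegral_congr_ae this]
    simp
  have hdm : Measurable fun y => (‖g0 y - gT y‖₊ : ℝ≥0∞) := (hg0.sub hgt_meas).enorm
  have h00 : ∫⁻ x, ∫⁻ y, (‖g0 y - gT y‖₊ : ℝ≥0∞) ∂(κn x) ∂μ0 = 0 := by
    rw [← Measure.lintegral_bind (Kernel.measurable _).aemeasurable hdm.aemeasurable, ← hbind]
    exact hdiff0
  have hxmeas : Measurable fun x => ∫⁻ y, (‖g0 y - gT y‖₊ : ℝ≥0∞) ∂(κn x) := by
    exact Measurable.lintegral_kernel_prod_right' (κ := κn)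
      (f := fun q : X × X => (‖g0 q.2 - gT q.2‖₊ : ℝ≥0∞)) (hdm.comp measurable_snd)
  have hIae : ∀ᵐ x ∂μ0, ∫ y, g0 y ∂(κn x) = ∫ y, gT y ∂(κn x) := by
    have h1 := (lintegral_eq_zero_iff hxmeas).1 h00
    refine h1.mono fun x hx => ?_
    have h2 := (lintegral_eq_zero_iff hdm).1 hx
    refine integral_congr_ae (h2.mono fun y hy => ?_)
    have : g0 y - gT y = 0 := by simpa using hy
    linarith
  set Ig : X → ℝ := fun x => ∫ y, gT y ∂(κn x) with hIg_def
  have hIg_sm : StronglyMeasurable Ig :=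
    StronglyMeasurable.integral_kernel_prod_right' (κ := κn)
      (f := fun q : X × X => gT q.2) ((hgt_meas.comp measurable_snd).stronglyMeasurable)
  have hIg_le : ∀ x, |Ig x| ≤ b := fun x =>
    norm_integral_le_of_bound fun y => (Real.norm_eq_abs _).trans_le (hgt_le y)
  set cg : ℝ := ∫ y, gT y ∂μn with hcg_def
  have hcg_le : |cg| ≤ b :=
    norm_integral_le_of_bound fun y => (Real.norm_eq_abs _).trans_le (hgt_le y)
  -- integrability
  have hInt1 : Integrable (fun x => fT x * Ig x) μ0 := by
    refine Integrable.mono' (integrable_const (a * b))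
      (hft_meas.aestronglyMeasurable.mul hIg_sm.aestronglyMeasurable)
      (Eventually.of_forall fun x => ?_)
    rw [Real.norm_eq_abs, abs_mul]
    exact mul_le_mul (hft_le x) (hIg_le x) (abs_nonneg _) ha
  have hftInt : Integrable fT μ0 := by
    refine Integrable.mono' (integrable_const a) hft_meas.aestronglyMeasurable
      (Eventually.of_forall fun x => ?_)
    rw [Real.norm_eq_abs]; exact hft_le x
  have hInt2 : Integrable (fun x => fT x * cg) μ0 := hftInt.mul_const cg
  -- rewrite A and B
  have hA_eq : (∫ x, f0 x * ∫ y, g0 y ∂(κn x) ∂μ0) = ∫ x, fT x * Ig x ∂μ0 := by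
    refine integral_congr_ae ?_
    filter_upwards [hfae, hIae] with x h1 h2
    rw [h1, h2]
  have hB_eq : (∫ x, f0 x ∂μ0) * ∫ y, g0 y ∂μn = ∫ x, fT x * cg ∂μ0 := by
    rw [integral_congr_ae hfae, integral_congr_ae hgae, integral_mul_const]
  -- the opDist bound
  have hIDc : ∀ x, |Ig x - cg| ≤ b * D := by
    intro x
    rcases eq_or_lt_of_le hb with hb0 | hbpos
    · have hgt0 : ∀ y, gT y = 0 := fun y => abs_nonpos_iff.1 ((hgt_le y).trans hb0.symm.le)
      have : Ig x = 0 := by simp [hIg_def, funext hgt0]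
      have hcg0 : cg = 0 := by simp [hcg_def, funext hgt0]
      simp [this, hcg0, ← hb0]
    · set g1 : X → ℝ := fun y => gT y * b⁻¹ with hg1_def
      have hg1m : Measurable g1 := hgt_meas.mul_const _
      have hg1le : ∀ y, |g1 y| ≤ 1 := fun y => by
        rw [hg1_def, abs_mul, abs_inv, abs_of_pos hbpos]
        calc |gT y| * b⁻¹ ≤ b * b⁻¹ :=
              mul_le_mul_of_nonneg_right (hgt_le y) (inv_nonneg.2 hb)
        _ = 1 := mul_inv_cancel₀ hbpos.ne'
      have hBdd : BddAbove { r : ℝ | ∃ g : X → ℝ, Measurable g ∧ (∀ x, |g x| ≤ 1) ∧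
          ∃ x : X, r = |(∫ y, g y ∂(κn x)) - ∫ y, g y ∂μn| } := by
        refine ⟨2, fun r hr => ?_⟩
        obtain ⟨g2, hg2m, hg2le, x2, hr⟩ := hr
        rw [hr]
        have h1 : |∫ y, g2 y ∂(κn x2)| ≤ 1 :=
          norm_integral_le_of_bound fun y => (Real.norm_eq_abs _).trans_le (hg2le y)
        have h2 : |∫ y, g2 y ∂μn| ≤ 1 :=
          norm_integral_le_of_bound fun y => (Real.norm_eq_abs _).trans_le (hg2le y)
        calc |(∫ y, g2 y ∂(κn x2)) - ∫ y, g2 y ∂μn| ≤ _ + _ := abs_sub _ _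
          _ ≤ 2 := by linarith
      have hmem : |(∫ y, g1 y ∂(κn x)) - ∫ y, g1 y ∂μn| ∈ { r : ℝ | ∃ g : X → ℝ,
          Measurable g ∧ (∀ x, |g x| ≤ 1) ∧
          ∃ x : X, r = |(∫ y, g y ∂(κn x)) - ∫ y, g y ∂μn| } := ⟨g1, hg1m, hg1le, x, rfl⟩
      have hle : |(∫ y, g1 y ∂(κn x)) - ∫ y, g1 y ∂μn| ≤ opDist κn μn := le_csSup hBdd hmem
      have hIgx : Ig x = b * ∫ y, g1 y ∂(κn x) := by
        rw [hIg_def]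
        simp only [hg1_def]
        rw [integral_mul_const]
        field_simp
      have hcgb : cg = b * ∫ y, g1 y ∂μn := by
        rw [hcg_def]
        simp only [hg1_def]
        rw [integral_mul_const]
        field_simp
      rw [hIgx, hcgb, ← mul_sub, abs_mul, abs_of_pos hbpos]
      exact mul_le_mul_of_nonneg_left (hle.trans hD) hb
  refine ⟨?_, ?_, ?_⟩
  · rw [hA_eq, hB_eq, ← integral_sub hInt1 hInt2]
    have : ∀ x, ‖fT x * Ig x - fT x * cg‖ ≤ a * (b * D) := by
      intro x
      rw [← mul_sub, Real.norm_eq_abs, abs_mul]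
      exact mul_le_mul (hft_le x) (hIDc x) (abs_nonneg _) ha
    calc |∫ x, (fT x * Ig x - fT x * cg) ∂μ0| ≤ a * (b * D) :=
          norm_integral_le_of_bound this
      _ = a * b * D := by ring
  · rw [hA_eq]
    refine norm_integral_le_of_bound fun x => ?_
    rw [Real.norm_eq_abs, abs_mul]
    exact mul_le_mul (hft_le x) (hIg_le x) (abs_nonneg _) ha
  · rw [hB_eq]
    refine norm_integral_le_of_bound fun x => ?_
    rw [Real.norm_eq_abs, abs_mul]
    exact mul_le_mul (hft_le x) ((hcg_le : |cg| ≤ b)) (abs_nonneg _) ha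

set_option maxHeartbeats 1000000 in
/-- **Decorrelation of the chain coordinate**. Under `ψ_U(n) → 0`, the random Doeblin
condition and the effective rates for `(μ_ω)`, with envelopes `F, G ∈ L^q(ℙ)`
(`q > 2`) for `f, g`, there are `C > 0` and `ρ₁ ∈ (0,1)` such that for every `n`,
`|∫∫ f·(R_{ω,n} g) dμ_ω dℙ − ∫ μ_ω(f) μ_{θ^n ω}(g) dℙ| ≤ C ρ₁^n ‖F‖_{L^q} ‖G‖_{L^q}`. -/
theorem chain_coordinate_decorrelation
    (P : Measure (ℤ → 𝒴)) [IsProbabilityMeasure P] (herg : Ergodic shift P)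
    (hmix : Tendsto (psiU (𝒴 := 𝒴) P) atTop (nhds 0))
    (R : 𝒴 → Kernel X X) [∀ y, IsMarkovKernel (R y)]
    (hRmeas : ∀ Γ : Set X, MeasurableSet Γ →
      Measurable fun a : 𝒴 × X => R a.1 a.2 Γ)
    (nD : (ℤ → 𝒴) → ℕ) (γ : (ℤ → 𝒴) → ℝ) (m : (ℤ → 𝒴) → Measure X)
    (hnD : Measurable nD) (hγ : Measurable γ)
    (hγ01 : ∀ ω, γ ω ∈ Set.Ioo (0 : ℝ) 1)
    (hmprob : ∀ ω, IsProbabilityMeasure (m ω))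
    (hmmeas : ∀ Γ : Set X, MeasurableSet Γ → Measurable fun ω => m ω Γ)
    (hDoeb : Doeblin P R nD γ m)
    (μ : (ℤ → 𝒴) → Measure X) (hμprob : ∀ ω, IsProbabilityMeasure (μ ω))
    (hμmeas : ∀ Γ : Set X, MeasurableSet Γ → Measurable fun ω => μ ω Γ)
    (hequi : Equivariant P R μ)
    (ρ : ℝ) (hρ : ρ ∈ Set.Ioo (0 : ℝ) 1) (hrates : EffectiveRates P R μ ρ)
    (f g : 𝒴 × X → ℝ) (hfmeas : Measurable f) (hgmeas : Measurable g)
    (q : ℝ) (hq : 2 < q)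
    (F G : (ℤ → 𝒴) → ℝ)
    (hFess : ∀ ω, ∀ᵐ x ∂(μ ω), |f (ω 0, x)| ≤ F ω)
    (hGess : ∀ ω, ∀ᵐ x ∂(μ ω), |g (ω 0, x)| ≤ G ω)
    (hFq : MemLp F (ENNReal.ofReal q) P) (hGq : MemLp G (ENNReal.ofReal q) P) :
    ∃ C : ℝ, 0 < C ∧ ∃ ρ1 : ℝ, ρ1 ∈ Set.Ioo (0 : ℝ) 1 ∧ ∀ n : ℕ,
      |(∫ ω, (∫ x, f (ω 0, x) *
            ∫ y, g (ω (n : ℤ), y) ∂((Rcomp R n ω) x) ∂(μ ω)) ∂P) -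
          ∫ ω, (∫ x, f (ω 0, x) ∂(μ ω)) *
            ∫ x, g (ω (n : ℤ), x) ∂(μ (shift^[n] ω)) ∂P| ≤
        C * ρ1 ^ n * (eLpNorm F (ENNReal.ofReal q) P).toReal *
          (eLpNorm G (ENNReal.ofReal q) P).toReal := by
  classical
  have hq0 : (0 : ℝ) < q := by linarith
  have hq2 : (0 : ℝ) < q - 2 := by linarith
  set p : ℝ := q / (q - 2) with hp_def
  have hppos : 0 < p := div_pos hq0 hq2
  have hp1 : 1 ≤ p := by rw [le_div_iff₀ hq2]; linarith
  obtain ⟨K, hKq, hKrate⟩ := hrates p hp1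
  set oq := ENNReal.ofReal q with hoq
  set op := ENNReal.ofReal p with hop
  set r : ℝ := q / (q - 1) with hr_def
  have hq1 : (0 : ℝ) < q - 1 := by linarith
  have hrpos : 0 < r := div_pos hq0 hq1
  set or' := ENNReal.ofReal r with hor
  -- envelopes
  set F' : (ℤ → 𝒴) → ℝ := fun ω => max (F ω) 0 with hF'
  set G' : (ℤ → 𝒴) → ℝ := fun ω => max (G ω) 0 with hG'
  have habs : ∀ v : ℝ, ‖max v 0‖ ≤ ‖v‖ := fun v => by
    rw [Real.norm_eq_abs, Real.norm_eq_abs, abs_of_nonneg (le_max_right v 0)]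
    exact max_le (le_abs_self v) (abs_nonneg v)
  have hF'q : MemLp F' oq P :=
    hFq.of_le ((hFq.1.aemeasurable.max aemeasurable_const).aestronglyMeasurable) (Eventually.of_forall fun ω => habs _)
  have hG'q : MemLp G' oq P :=
    hGq.of_le ((hGq.1.aemeasurable.max aemeasurable_const).aestronglyMeasurable) (Eventually.of_forall fun ω => habs _)
  have hmp : MeasurePreserving shift P P := herg.toMeasurePreserving
  have hmpn : ∀ n : ℕ, MeasurePreserving (shift^[n] : (ℤ → 𝒴) → ℤ → 𝒴) P P := hmp.iterate
  -- a.e. facts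
  have horb : ∀ᵐ ω ∂P, ∀ j : ℕ, ∀ Γ : Set X, MeasurableSet Γ →
      μ (shift (shift^[j] ω)) Γ = ∫⁻ x, R ((shift^[j] ω) 0) x Γ ∂ μ (shift^[j] ω) :=
    ae_all_iff.2 fun j => (hmpn j).quasiMeasurePreserving.ae hequi
  have hbindAE : ∀ᵐ ω ∂P, ∀ n : ℕ, μ (shift^[n] ω) = (μ ω).bind ⇑(Rcomp R n ω) :=
    horb.mono fun ω h n => equi_induct R μ n ω h
  -- A and B
  set A : ℕ → (ℤ → 𝒴) → ℝ := fun n ω =>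
    ∫ x, f (ω 0, x) * ∫ y, g (ω (n : ℤ), y) ∂((Rcomp R n ω) x) ∂(μ ω) with hA
  set B : ℕ → (ℤ → 𝒴) → ℝ := fun n ω =>
    (∫ x, f (ω 0, x) ∂(μ ω)) * ∫ x, g (ω (n : ℤ), x) ∂(μ (shift^[n] ω)) with hB
  -- core pointwise bounds
  have hcore : ∀ᵐ ω ∂P, ∀ n : ℕ,
      |A n ω - B n ω| ≤ F' ω * G' (shift^[n] ω) * (|K ω| * ρ ^ ((n : ℝ) / p))
      ∧ |A n ω| ≤ F' ω * G' (shift^[n] ω)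
      ∧ |B n ω| ≤ F' ω * G' (shift^[n] ω) := by
    filter_upwards [hbindAE, hKrate] with ω hbind hrate n
    haveI := hμprob ω; haveI := hμprob (shift^[n] ω)
    haveI := Rcomp_markov R n ω
    have hc0 : (shift^[n] ω) 0 = ω (n : ℤ) := by rw [shift_iterate_apply]; norm_num
    have hFa : ∀ᵐ x ∂(μ ω), |f (ω 0, x)| ≤ F' ω :=
      (hFess ω).mono fun x hx => hx.trans (le_max_left _ _)
    have hGb : ∀ᵐ x ∂(μ (shift^[n] ω)), |g (ω (n : ℤ), x)| ≤ G' (shift^[n] ω) := by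
      have h1 := hGess (shift^[n] ω)
      rw [hc0] at h1
      exact h1.mono fun x hx => hx.trans (le_max_left _ _)
    have hD : opDist (Rcomp R n ω) (μ (shift^[n] ω)) ≤ |K ω| * ρ ^ ((n : ℝ) / p) := by
      refine le_trans (le_max_right _ _) ((hrate n).trans ?_)
      exact mul_le_mul_of_nonneg_right (le_abs_self _) (Real.rpow_nonneg hρ.1.le _)
    have hD0 : 0 ≤ |K ω| * ρ ^ ((n : ℝ) / p) :=
      mul_nonneg (abs_nonneg _) (Real.rpow_nonneg hρ.1.le _)
    have hfm : Measurable fun x => f (ω 0, x) := hfmeas.comp measurable_prodMk_left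
    have hgm : Measurable fun x => g (ω (n : ℤ), x) := hgmeas.comp measurable_prodMk_left
    exact core_est (μ ω) (μ (shift^[n] ω)) (Rcomp R n ω) (hbind n)
      _ _ hfm hgm (F' ω) (G' (shift^[n] ω)) (le_max_right _ _) (le_max_right _ _)
      hFa hGb _ hD hD0
  -- strong measurability of A and B
  have hμm : Measurable (μ : (ℤ → 𝒴) → Measure X) :=
    Measure.measurable_of_measurable_coe _ hμmeas
  set κμ : Kernel (ℤ → 𝒴) X := ⟨μ, hμm⟩ with hκμ
  haveI : IsMarkovKernel κμ := ⟨fun ω => hμprob ω⟩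
  have hfsm : StronglyMeasurable fun pq : (ℤ → 𝒴) × X => f (pq.1 0, pq.2) :=
    (hfmeas.comp (((measurable_pi_apply _).comp measurable_fst).prodMk
      measurable_snd)).stronglyMeasurable
  have hAsm : ∀ n : ℕ, StronglyMeasurable (A n) := by
    intro n
    set κn' : Kernel ((ℤ → 𝒴) × X) X := ⟨fun pq => Rcomp R n pq.1 pq.2,
      Measure.measurable_of_measurable_coe _ fun Γ hΓ => Rcomp_measurable R hRmeas n hΓ⟩
      with hκn'
    haveI : IsMarkovKernel κn' :=
      ⟨fun pq => (Rcomp_markov R n pq.1).isProbabilityMeasure pq.2⟩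
    have hgsm : StronglyMeasurable fun z : ((ℤ → 𝒴) × X) × X => g (z.1.1 (n : ℤ), z.2) :=
      (hgmeas.comp (((measurable_pi_apply _).comp
        (measurable_fst.comp measurable_fst)).prodMk measurable_snd)).stronglyMeasurable
    have hIsm : StronglyMeasurable fun pq : (ℤ → 𝒴) × X =>
        ∫ y, g (pq.1 (n : ℤ), y) ∂(κn' pq) :=
      StronglyMeasurable.integral_kernel_prod_right' (κ := κn') hgsm
    have hΦ : StronglyMeasurable fun pq : (ℤ → 𝒴) × X =>
        f (pq.1 0, pq.2) * ∫ y, g (pq.1 (n : ℤ), y) ∂(κn' pq) := hfsm.mul hIsm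
    exact hΦ.integral_kernel_prod_right' (κ := κμ)
  have hBsm : ∀ n : ℕ, StronglyMeasurable (B n) := by
    intro n
    have h1 : StronglyMeasurable fun ω => ∫ x, f (ω 0, x) ∂(κμ ω) :=
      StronglyMeasurable.integral_kernel_prod_right' (κ := κμ) hfsm
    have hgsm : StronglyMeasurable fun pq : (ℤ → 𝒴) × X => g (pq.1 0, pq.2) :=
      (hgmeas.comp (((measurable_pi_apply _).comp measurable_fst).prodMk
        measurable_snd)).stronglyMeasurable
    have h2 : StronglyMeasurable fun ω => ∫ x, g (ω 0, x) ∂(κμ ω) :=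
      StronglyMeasurable.integral_kernel_prod_right' (κ := κμ) hgsm
    have h3 : StronglyMeasurable fun ω : ℤ → 𝒴 =>
        ∫ x, g ((shift^[n] ω) 0, x) ∂(μ (shift^[n] ω)) :=
      h2.comp_measurable (hmpn n).measurable
    have hBeq : B n = fun ω => (∫ x, f (ω 0, x) ∂(μ ω)) *
        ∫ x, g ((shift^[n] ω) 0, x) ∂(μ (shift^[n] ω)) := by
      funext ω
      have hc0 : (shift^[n] ω) 0 = ω (n : ℤ) := by rw [shift_iterate_apply]; norm_num
      rw [hB]
      simp only [hc0]
    rw [hBeq]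
    exact (StronglyMeasurable.integral_kernel_prod_right' (κ := κμ) hfsm).mul h3
  -- conclusion
  refine ⟨(eLpNorm K op P).toReal + 1, by positivity, ρ ^ (1 / p),
    ⟨Real.rpow_pos_of_pos hρ.1 _, Real.rpow_lt_one hρ.1.le hρ.2 (by positivity)⟩, fun n => ?_⟩
  -- integrability of A n and B n
  set Gn : (ℤ → 𝒴) → ℝ := fun ω => G' (shift^[n] ω) with hGn
  have hGnq : MemLp Gn oq P := hG'q.comp_measurePreserving (hmpn n)
  have h2q : (2 : ℝ≥0∞) ≤ oq := by
    rw [hoq, show (2 : ℝ≥0∞) = ENNReal.ofReal 2 by norm_num]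
    exact ENNReal.ofReal_le_ofReal hq.le
  have hF2 : MemLp F' 2 P := hF'q.mono_exponent h2q
  have hG2 : MemLp Gn 2 P := hGnq.mono_exponent h2q
  have h12 : (1 : ℝ≥0∞) / 1 = 1 / 2 + 1 / 2 := by
    rw [ENNReal.div_add_div_same, one_div_one, one_add_one_eq_two, ENNReal.div_self two_ne_zero ENNReal.ofNat_ne_top]
  have hFGmem : MemLp (F' • Gn) 1 P := hG2.smul hF2 (hpqr := ⟨by simpa [one_div] using h12.symm⟩)
  have hFGint : Integrable (fun ω => F' ω * Gn ω) P := by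
    have h := memLp_one_iff_integrable.1 hFGmem
    exact h
  have hAint : Integrable (A n) P :=
    Integrable.mono' hFGint (hAsm n).aestronglyMeasurable
      (hcore.mono fun ω h => by rw [Real.norm_eq_abs]; exact (h n).2.1)
  have hBint : Integrable (B n) P :=
    Integrable.mono' hFGint (hBsm n).aestronglyMeasurable
      (hcore.mono fun ω h => by rw [Real.norm_eq_abs]; exact (h n).2.2)
  -- exponent identities
  have hinvq : (1 : ℝ≥0∞) / oq = ENNReal.ofReal (1 / q) := by
    rw [one_div, one_div, hoq, ENNReal.ofReal_inv_of_pos hq0]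
  have hinvp : (1 : ℝ≥0∞) / op = ENNReal.ofReal (1 / p) := by
    rw [one_div, one_div, hop, ENNReal.ofReal_inv_of_pos hppos]
  have hinvr : (1 : ℝ≥0∞) / or' = ENNReal.ofReal (1 / r) := by
    rw [one_div, one_div, hor, ENNReal.ofReal_inv_of_pos hrpos]
  have hexp1 : (1 : ℝ≥0∞) / 1 = 1 / oq + 1 / or' := by
    rw [hinvq, hinvr, ← ENNReal.ofReal_add (by positivity) (by positivity), one_div_one,
      show (1 : ℝ≥0∞) = ENNReal.ofReal 1 by simp]
    congr 1
    rw [hr_def]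
    field_simp
    ring
  have hexp2 : (1 : ℝ≥0∞) / or' = 1 / oq + 1 / op := by
    rw [hinvq, hinvr, hinvp, ← ENNReal.ofReal_add (by positivity) (by positivity)]
    congr 1
    rw [hr_def, hp_def]
    field_simp
    ring
  -- Hölder
  have hGKsm : AEStronglyMeasurable (Gn • K) P := by
    have h := hGnq.1.mul hKq.1
    have : (Gn • K) = fun ω => Gn ω * K ω := by
      funext ω; simp [Pi.smul_apply, smul_eq_mul]
    rw [this]
    exact h
  have hH2 : eLpNorm (Gn • K) or' P ≤ eLpNorm Gn oq P * eLpNorm K op P :=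
    eLpNorm_smul_le_mul_eLpNorm hKq.1 hGnq.1 (hpqr := ⟨by simpa [one_div] using hexp2.symm⟩)
  have hH1 : eLpNorm (F' • (Gn • K)) 1 P ≤
      eLpNorm F' oq P * (eLpNorm Gn oq P * eLpNorm K op P) := by
    have h : eLpNorm (F' • (Gn • K)) 1 P ≤ eLpNorm F' oq P * eLpNorm (Gn • K) or' P :=
      eLpNorm_smul_le_mul_eLpNorm hGKsm hF'q.1 (hpqr := ⟨by simpa [one_div] using hexp1.symm⟩)
    exact h.trans (mul_le_mul_right hH2 _)
  have heF : eLpNorm F' oq P ≤ eLpNorm F oq P := eLpNorm_mono fun ω => habs _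
  have heGn : eLpNorm Gn oq P = eLpNorm G' oq P := by
    have h := eLpNorm_comp_measurePreserving (p := oq) (g := G') (f := shift^[n]) hG'q.1 (hmpn n)
    have h2 : Gn = G' ∘ shift^[n] := rfl
    rw [h2]
    exact h
  have heG : eLpNorm G' oq P ≤ eLpNorm G oq P := eLpNorm_mono fun ω => habs _
  have hρn : (0 : ℝ) ≤ ρ ^ ((n : ℝ) / p) := Real.rpow_nonneg hρ.1.le _
  -- main lintegral bound
  have hlin : ∫⁻ ω, (‖A n ω - B n ω‖₊ : ℝ≥0∞) ∂P ≤
      ENNReal.ofReal (ρ ^ ((n : ℝ) / p)) *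
        (eLpNorm F oq P * (eLpNorm G oq P * eLpNorm K op P)) := by
    have step1 : ∫⁻ ω, (‖A n ω - B n ω‖₊ : ℝ≥0∞) ∂P ≤
        ∫⁻ ω, ENNReal.ofReal (ρ ^ ((n : ℝ) / p)) *
          ((‖F' ω‖₊ : ℝ≥0∞) * ((‖Gn ω‖₊ : ℝ≥0∞) * (‖K ω‖₊ : ℝ≥0∞))) ∂P := by
      refine lintegral_mono_ae (hcore.mono fun ω h => ?_)
      rw [← enorm_eq_nnnorm, Real.enorm_eq_ofReal_abs]
      refine le_trans (ENNReal.ofReal_le_ofReal ((h n).1)) ?_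
      have hGn0 : (0 : ℝ) ≤ Gn ω := le_max_right _ _
      have hF0 : (0 : ℝ) ≤ F' ω := le_max_right _ _
      rw [show F' ω * G' (shift^[n] ω) * (|K ω| * ρ ^ ((n : ℝ) / p)) =
        ρ ^ ((n : ℝ) / p) * (F' ω * (Gn ω * |K ω|)) by rw [hGn]; ring]
      rw [ENNReal.ofReal_mul hρn, ENNReal.ofReal_mul hF0, ENNReal.ofReal_mul hGn0,
        ← enorm_eq_nnnorm (F' ω), ← enorm_eq_nnnorm (Gn ω), ← enorm_eq_nnnorm (K ω),
        Real.enorm_eq_ofReal hF0, Real.enorm_eq_ofReal hGn0, Real.enorm_eq_ofReal_abs]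
    refine step1.trans ?_
    rw [lintegral_const_mul' _ _ ENNReal.ofReal_ne_top]
    refine mul_le_mul_right ?_ _
    have hEq : ∫⁻ ω, ((‖F' ω‖₊ : ℝ≥0∞) * ((‖Gn ω‖₊ : ℝ≥0∞) * (‖K ω‖₊ : ℝ≥0∞))) ∂P
        = eLpNorm (F' • (Gn • K)) 1 P := by
      rw [eLpNorm_one_eq_lintegral_enorm]
      refine lintegral_congr fun ω => ?_
      simp [Pi.smul_apply, smul_eq_mul, nnnorm_mul, ENNReal.coe_mul]
      rfl
    rw [hEq]
    exact hH1.trans (mul_le_mul' heF (mul_le_mul' (heGn.le.trans heG) le_rfl))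
  -- put everything together
  have hfin : ENNReal.ofReal (ρ ^ ((n : ℝ) / p)) *
      (eLpNorm F oq P * (eLpNorm G oq P * eLpNorm K op P)) ≠ ∞ :=
    ENNReal.mul_ne_top ENNReal.ofReal_ne_top
      (ENNReal.mul_ne_top hFq.eLpNorm_ne_top
        (ENNReal.mul_ne_top hGq.eLpNorm_ne_top hKq.eLpNorm_ne_top))
  have h3 := ENNReal.toReal_mono hfin hlin
  have hrw : (ρ ^ (1 / p)) ^ n = ρ ^ ((n : ℝ) / p) := by
    rw [← Real.rpow_natCast (ρ ^ (1 / p)) n, ← Real.rpow_mul hρ.1.le]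
    congr 1
    field_simp
  show |(∫ ω, A n ω ∂P) - ∫ ω, B n ω ∂P| ≤ _
  rw [← integral_sub hAint hBint]
  have hstep : |∫ ω, (A n ω - B n ω) ∂P| ≤ ∫ ω, ‖A n ω - B n ω‖ ∂P := by
    rw [← Real.norm_eq_abs]
    exact norm_integral_le_integral_norm _
  have heq2 : ∫ ω, ‖A n ω - B n ω‖ ∂P = (∫⁻ ω, (‖A n ω - B n ω‖₊ : ℝ≥0∞) ∂P).toReal :=
    integral_norm_eq_lintegral_enorm ((hAsm n).sub (hBsm n)).aestronglyMeasurable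
  set Fr := (eLpNorm F oq P).toReal with hFr
  set Gr := (eLpNorm G oq P).toReal with hGr
  set Kr := (eLpNorm K op P).toReal with hKr
  have hFr0 : 0 ≤ Fr := ENNReal.toReal_nonneg
  have hGr0 : 0 ≤ Gr := ENNReal.toReal_nonneg
  have hKr0 : 0 ≤ Kr := ENNReal.toReal_nonneg
  have h4 : (ENNReal.ofReal (ρ ^ ((n : ℝ) / p)) *
      (eLpNorm F oq P * (eLpNorm G oq P * eLpNorm K op P))).toReal
      = ρ ^ ((n : ℝ) / p) * (Fr * (Gr * Kr)) := by
    rw [ENNReal.toReal_mul, ENNReal.toReal_mul, ENNReal.toReal_mul,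
      ENNReal.toReal_ofReal hρn]
  have hx0 : (0 : ℝ) ≤ (ρ ^ (1 / p)) ^ n :=
    pow_nonneg (Real.rpow_nonneg hρ.1.le _) n
  calc |∫ ω, (A n ω - B n ω) ∂P| ≤ ∫ ω, ‖A n ω - B n ω‖ ∂P := hstep
    _ = (∫⁻ ω, (‖A n ω - B n ω‖₊ : ℝ≥0∞) ∂P).toReal := heq2
    _ ≤ ρ ^ ((n : ℝ) / p) * (Fr * (Gr * Kr)) := by rw [← h4]; exact h3
    _ = ((ρ ^ (1 / p)) ^ n * Fr * Gr) * Kr := by rw [← hrw]; ring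
    _ ≤ ((ρ ^ (1 / p)) ^ n * Fr * Gr) * (Kr + 1) := by
        refine mul_le_mul_of_nonneg_left (by linarith) ?_
        positivity
    _ = (Kr + 1) * (ρ ^ (1 / p)) ^ n * Fr * Gr := by ring

end
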